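/- Let T > 0 and C ≥ 0. Let μ be a finite Borel measure on ℝ, and for each t ∈ [0,T] let ν_t be a finite Borel measure on ℝ. Assume that for all s, t ∈ [0,T] with s ≠ t and every Borel set B ⊆ ℝ one has ν_t(B) ≤ C·( Leb(B)/|t−s| + μ([min(s,t), max(s,t)]) ), where Leb denotes one-dimensional Lebesgue measure. Then the set S = { t ∈ [0,T] : ν_t is not absolutely continuous with respect to Leb } is at most countable. -/

import Mathlib

open MeasureTheory Set Filter

lemma aux_le_zero_of_tendsto {a : ENNReal} {f : ℕ → ENNReal}
    (hf : Filter.Tendsto f atTop (nhds 0)) (hle : ∀ n, a ≤ f n) : a = 0 :=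
  le_antisymm (ge_of_tendsto' hf hle) (zero_le)

lemma aux_tendsto_Icc_left (μ : Measure ℝ) [IsFiniteMeasure μ] (t : ℝ) (s : ℕ → ℝ)
    (hub : ∀ n, t ≤ s n) (hanti : Antitone s) (hlim : Filter.Tendsto s atTop (nhds t)) :
    Filter.Tendsto (fun n => μ (Icc t (s n))) atTop (nhds (μ ({t} : Set ℝ))) := by
  have hInt : (⋂ n, Icc t (s n)) = ({t} : Set ℝ) := by
    apply subset_antisymm
    · intro x hx
      simp only [mem_iInter, mem_Icc] at hx
      have hx1 : t ≤ x := (hx 0).1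
      have hx2 : x ≤ t := ge_of_tendsto hlim (Eventually.of_forall fun n => (hx n).2)
      simp [le_antisymm hx2 hx1]
    · intro x hx
      simp only [mem_singleton_iff] at hx
      subst hx
      exact mem_iInter.2 fun n => ⟨le_refl _, hub n⟩
  have := tendsto_measure_iInter_atTop (μ := μ)
    (s := fun n => Icc t (s n)) (fun n => measurableSet_Icc.nullMeasurableSet)
    (fun i j hij => Icc_subset_Icc le_rfl (hanti hij)) ⟨0, measure_ne_top _ _⟩
  rw [hInt] at this
  exact this

lemma aux_tendsto_Icc_right (μ : Measure ℝ) [IsFiniteMeasure μ] (t : ℝ) (s : ℕ → ℝ)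
    (hub : ∀ n, s n ≤ t) (hmono : Monotone s) (hlim : Filter.Tendsto s atTop (nhds t)) :
    Filter.Tendsto (fun n => μ (Icc (s n) t)) atTop (nhds (μ ({t} : Set ℝ))) := by
  have hInt : (⋂ n, Icc (s n) t) = ({t} : Set ℝ) := by
    apply subset_antisymm
    · intro x hx
      simp only [mem_iInter, mem_Icc] at hx
      have hx1 : x ≤ t := (hx 0).2
      have hx2 : t ≤ x := le_of_tendsto hlim (Eventually.of_forall fun n => (hx n).1)
      simp [le_antisymm hx1 hx2]
    · intro x hx
      simp only [mem_singleton_iff] at hx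
      subst hx
      exact mem_iInter.2 fun n => ⟨hub n, le_refl _⟩
  have := tendsto_measure_iInter_atTop (μ := μ)
    (s := fun n => Icc (s n) t) (fun n => measurableSet_Icc.nullMeasurableSet)
    (fun i j hij => Icc_subset_Icc (hmono hij) le_rfl) ⟨0, measure_ne_top _ _⟩
  rw [hInt] at this
  exact this

lemma aux_seq_tendsto (c : ℝ) : Filter.Tendsto (fun n : ℕ => c / (n + 1)) atTop (nhds 0) := by
  have : Filter.Tendsto (fun n : ℕ => 1 / ((n : ℝ) + 1)) atTop (nhds 0) :=
    tendsto_one_div_add_atTop_nhds_zero_nat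
  have h2 : Filter.Tendsto (fun n : ℕ => c * (1 / ((n : ℝ) + 1))) atTop (nhds (c * 0)) :=
    this.const_mul c
  simpa [div_eq_mul_inv] using h2

/-- Abstract Ol\u0065inik-type estimate, countability form: under the two-sided decay
estimate, the set of times `t ∈ [0,T]` at which `ν t` fails to be absolutely
continuous with respect to Lebesgue measure is at most countable. -/
theorem oleinik_abstract_countable
    (T : ℝ) (hT : 0 < T) (C : ℝ) (hC : 0 ≤ C)
    (μ : Measure ℝ) [IsFiniteMeasure μ]
    (ν : ℝ → Measure ℝ) (hνfin : ∀ t ∈ Icc (0 : ℝ) T, IsFiniteMeasure (ν t))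
    (h : ∀ s ∈ Icc (0 : ℝ) T, ∀ t ∈ Icc (0 : ℝ) T, s ≠ t →
      ∀ B : Set ℝ, MeasurableSet B →
        ν t B ≤ ENNReal.ofReal C *
          (volume B / ENNReal.ofReal |t - s| + μ (Icc (min s t) (max s t)))) :
    Set.Countable {t ∈ Icc (0 : ℝ) T | ¬ (ν t).AbsolutelyContinuous volume} := by
  have hatoms : Set.Countable {t : ℝ | 0 < μ {t}} := by
    have := Measure.countable_meas_level_set_pos (μ := μ) (g := id) measurable_id
    simpa using this
  apply hatoms.mono
  rintro t ⟨ht, hna⟩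
  simp only [mem_setOf_eq]
  by_contra hpos
  push_neg at hpos
  have hμt : μ ({t} : Set ℝ) = 0 := le_antisymm hpos (zero_le)
  apply hna
  apply Measure.AbsolutelyContinuous.mk
  intro B hB hvolB
  rcases lt_or_eq_of_le ht.2 with htT | htT
  · -- t < T, approach from the right
    set s : ℕ → ℝ := fun n => t + (T - t) / (n + 1) with hs
    have hsgt : ∀ n, t < s n := fun n => by
      have : 0 < (T - t) / ((n : ℝ) + 1) := div_pos (by linarith) (by positivity)
      simp only [hs]; linarith
    have hsle : ∀ n, s n ≤ T := fun n => by
      have h1 : (T - t) / ((n : ℝ) + 1) ≤ (T - t) / 1 :=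
        div_le_div_of_nonneg_left (by linarith) one_pos (by
          have : (0 : ℝ) ≤ (n : ℝ) := Nat.cast_nonneg n
          linarith)
      simp only [hs]; linarith
    have hsmem : ∀ n, s n ∈ Icc (0 : ℝ) T := fun n => ⟨le_trans ht.1 (hsgt n).le, hsle n⟩
    have hkey : ∀ n, ν t B ≤ ENNReal.ofReal C * μ (Icc t (s n)) := by
      intro n
      have hest := h (s n) (hsmem n) t ht (hsgt n).ne' B hB
      rw [min_eq_right (hsgt n).le, max_eq_left (hsgt n).le, hvolB] at hest
      simpa using hest
    have hanti : Antitone s := by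
      intro i j hij
      simp only [hs]
      have : (T - t) / ((j : ℝ) + 1) ≤ (T - t) / ((i : ℝ) + 1) :=
        div_le_div_of_nonneg_left (by linarith) (by positivity)
          (by exact_mod_cast add_le_add_left (Nat.cast_le.2 hij) 1)
      linarith
    have hlim : Filter.Tendsto s atTop (nhds t) := by
      have := (aux_seq_tendsto (T - t)).const_add t
      simpa [hs] using this
    have hμlim : Filter.Tendsto (fun n => ENNReal.ofReal C * μ (Icc t (s n))) atTop
        (nhds 0) := by
      have h1 := aux_tendsto_Icc_left μ t s (fun n => (hsgt n).le) hanti hlim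
      rw [hμt] at h1
      have h2 := ENNReal.Tendsto.const_mul (a := ENNReal.ofReal C) h1
        (Or.inr ENNReal.ofReal_ne_top)
      simpa using h2
    exact aux_le_zero_of_tendsto hμlim hkey
  · -- t = T > 0, approach from the left
    have ht0 : 0 < t := htT ▸ hT
    set s : ℕ → ℝ := fun n => t - t / (n + 1) with hs
    have hslt : ∀ n, s n < t := fun n => by
      have : 0 < t / ((n : ℝ) + 1) := div_pos ht0 (by positivity)
      simp only [hs]; linarith
    have hsge : ∀ n, 0 ≤ s n := fun n => by
      have h1 : t / ((n : ℝ) + 1) ≤ t / 1 :=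
        div_le_div_of_nonneg_left ht0.le one_pos (by
          have : (0 : ℝ) ≤ (n : ℝ) := Nat.cast_nonneg n
          linarith)
      simp only [hs]; linarith
    have hsmem : ∀ n, s n ∈ Icc (0 : ℝ) T := fun n => ⟨hsge n, le_trans (hslt n).le ht.2⟩
    have hkey : ∀ n, ν t B ≤ ENNReal.ofReal C * μ (Icc (s n) t) := by
      intro n
      have hest := h (s n) (hsmem n) t ht (ne_of_lt (hslt n)) B hB
      rw [min_eq_left (hslt n).le, max_eq_right (hslt n).le, hvolB] at hest
      simpa using hest
    have hmono : Monotone s := by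
      intro i j hij
      simp only [hs]
      have : t / ((j : ℝ) + 1) ≤ t / ((i : ℝ) + 1) :=
        div_le_div_of_nonneg_left ht0.le (by positivity)
          (by exact_mod_cast add_le_add_left (Nat.cast_le.2 hij) 1)
      linarith
    have hlim : Filter.Tendsto s atTop (nhds t) := by
      have := ((aux_seq_tendsto t).const_sub t)
      simpa [hs] using this
    have hμlim : Filter.Tendsto (fun n => ENNReal.ofReal C * μ (Icc (s n) t)) atTop
        (nhds 0) := by
      have h1 := aux_tendsto_Icc_right μ t s (fun n => (hslt n).le) hmono hlim
      rw [hμt] at h1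
      have h2 := ENNReal.Tendsto.const_mul (a := ENNReal.ofReal C) h1
        (Or.inr ENNReal.ofReal_ne_top)
      simpa using h2
    exact aux_le_zero_of_tendsto hμlim hkey
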